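/- Assume 1 < γ ≤ 3. Let ψ ∈ C²(ℝ) be convex and satisfy, for some A > 0 and some δ with 0 ≤ δ ≤ 2, |ψ(s)| ≤ A|s|^{3−δ} and |ψ′(s)| ≤ A|s|^{2−δ} for all s ∈ ℝ. Then there exists a constant C > 0, depending only on γ, A and δ, such that for all ρ > 0 and u ∈ ℝ: |η^ψ(ρ, u)| + |q^ψ(ρ, u)| + (1/ρ)|∂_uη^ψ(ρ, u)|² ≤ C(1 + ρ|u|⁴ + g(ρ) + ρP(ρ)). -/

import Mathlib

open Real MeasureTheory

/-- `θ = (γ − 1)/2`. -/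
noncomputable def thetaExp (γ : ℝ) : ℝ := (γ - 1) / 2

/-- `λ = (3 − γ)/(2(γ − 1))`. -/
noncomputable def lamExp (γ : ℝ) : ℝ := (3 - γ) / (2 * (γ - 1))

/-- The weak entropy of the isentropic Euler system with polytropic pressure, generated by `ψ`:
`η^ψ(ρ, u) = ρ ∫_{−1}^{1} ψ(u + ρ^θ s)(1 − s²)^λ ds`. -/
noncomputable def entropy (γ : ℝ) (ψ : ℝ → ℝ) (ρ u : ℝ) : ℝ :=
  ρ * ∫ s in (-1:ℝ)..1, ψ (u + ρ ^ thetaExp γ * s) * (1 - s ^ 2) ^ lamExp γ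

/-- The weak entropy flux generated by `ψ`:
`q^ψ(ρ, u) = ρ ∫_{−1}^{1} (u + θρ^θ s) ψ(u + ρ^θ s)(1 − s²)^λ ds`. -/
noncomputable def entropyFlux (γ : ℝ) (ψ : ℝ → ℝ) (ρ u : ℝ) : ℝ :=
  ρ * ∫ s in (-1:ℝ)..1,
    (u + thetaExp γ * ρ ^ thetaExp γ * s) * ψ (u + ρ ^ thetaExp γ * s) * (1 - s ^ 2) ^ lamExp γ

/-- `κ = (γ − 1)²/(4γ)`. -/
noncomputable def kappaCoeff (γ : ℝ) : ℝ := (γ - 1) ^ 2 / (4 * γ)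

/-- The polytropic pressure `P(ρ) = κρ^γ`. -/
noncomputable def pressure (γ ρ : ℝ) : ℝ := kappaCoeff γ * ρ ^ γ

/-- `g(ρ) = (κ²γ/((γ−1)²(2γ−1))) ρ^{2γ−1}`, the unique function with `g(0) = g′(0) = 0` and
`g″(ρ) = 2P′(ρ)e(ρ)/ρ`. -/
noncomputable def gFun (γ ρ : ℝ) : ℝ :=
  kappaCoeff γ ^ 2 * γ / ((γ - 1) ^ 2 * (2 * γ - 1)) * ρ ^ (2 * γ - 1)

set_option maxHeartbeats 2000000 in
/-- For `1 < γ ≤ 3` and a convex `ψ ∈ C²(ℝ)` with `|ψ(s)| ≤ A|s|^{3−δ}` and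
`|ψ′(s)| ≤ A|s|^{2−δ}` for some `0 ≤ δ ≤ 2`, there is `C > 0` with
`|η^ψ| + |q^ψ| + (1/ρ)|∂_u η^ψ|² ≤ C(1 + ρ|u|⁴ + g(ρ) + ρP(ρ))` for all `ρ > 0`, `u ∈ ℝ`. -/
theorem entropy_subcubic_growth_bounds (γ : ℝ) (hγ : 1 < γ) (hγ3 : γ ≤ 3)
    (ψ : ℝ → ℝ) (hψ : ContDiff ℝ 2 ψ) (hconv : ConvexOn ℝ Set.univ ψ)
    (A δ : ℝ) (hA : 0 < A) (hδ0 : 0 ≤ δ) (hδ2 : δ ≤ 2)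
    (hψ_bound : ∀ s : ℝ, |ψ s| ≤ A * |s| ^ (3 - δ))
    (hψ'_bound : ∀ s : ℝ, |deriv ψ s| ≤ A * |s| ^ (2 - δ)) :
    ∃ C : ℝ, 0 < C ∧ ∀ ρ : ℝ, 0 < ρ → ∀ u : ℝ,
      |entropy γ ψ ρ u| + |entropyFlux γ ψ ρ u| +
          (1 / ρ) * |deriv (fun v => entropy γ ψ ρ v) u| ^ 2 ≤
        C * (1 + ρ * |u| ^ 4 + gFun γ ρ + ρ * pressure γ ρ) := by
  have h1 : (0:ℝ) < γ - 1 := by linarith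
  have hθle : thetaExp γ ≤ 1 := by unfold thetaExp; linarith
  have hθ0 : 0 < thetaExp γ := by unfold thetaExp; linarith
  have hLnn : 0 ≤ lamExp γ := div_nonneg (by linarith) (by linarith)
  have hκ : 0 < kappaCoeff γ := div_pos (pow_pos h1 2) (by linarith)
  set c := kappaCoeff γ ^ 2 * γ / ((γ - 1) ^ 2 * (2 * γ - 1)) with hc
  have hcpos : 0 < c :=
    div_pos (mul_pos (pow_pos hκ 2) (by linarith)) (mul_pos (pow_pos h1 2) (by linarith))
  set B := 2 / c with hBdef
  have hB : 0 ≤ B := by rw [hBdef]; positivity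
  have hBc : B * c = 2 := div_mul_cancel₀ 2 hcpos.ne'
  clear_value c B
  -- continuity facts
  have hw : Continuous (fun s : ℝ => (1 - s ^ 2) ^ lamExp γ) := by
    rw [continuous_iff_continuousAt]
    intro s
    exact ((continuous_const.sub (continuous_pow 2)).continuousAt).rpow_const (Or.inr hLnn)
  have hψc : Continuous ψ := hψ.continuous
  have hψ'c : Continuous (deriv ψ) := hψ.continuous_deriv (by norm_num)
  have hψd : Differentiable ℝ ψ := hψ.differentiable (by norm_num)
  -- weight bounds on the interval
  have hsw : ∀ s ∈ Set.uIoc (-1:ℝ) 1, |(1 - s ^ 2) ^ lamExp γ| ≤ 1 ∧ |s| ≤ 1 := by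
    intro s hs
    rw [Set.uIoc_of_le (by norm_num : (-1:ℝ) ≤ 1)] at hs
    obtain ⟨h1s, h2s⟩ := hs
    have habs : |s| ≤ 1 := abs_le.2 ⟨by linarith, h2s⟩
    have h0 : 0 ≤ 1 - s ^ 2 := by nlinarith
    refine ⟨?_, habs⟩
    rw [abs_of_nonneg (Real.rpow_nonneg h0 _)]
    exact Real.rpow_le_one h0 (by nlinarith) hLnn
  -- pointwise growth bounds for ψ and ψ'
  have hb3 : ∀ x : ℝ, |ψ x| ≤ A * (1 + |x|) ^ (3:ℕ) := by
    intro x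
    have hx0 : (0:ℝ) ≤ |x| := abs_nonneg x
    have key : |x| ^ (3 - δ) ≤ (1 + |x|) ^ (3:ℕ) := by
      calc |x| ^ (3 - δ) ≤ (1 + |x|) ^ (3 - δ) :=
            Real.rpow_le_rpow hx0 (by linarith) (by linarith)
        _ ≤ (1 + |x|) ^ (3:ℝ) :=
            Real.rpow_le_rpow_of_exponent_le (by linarith) (by linarith)
        _ = (1 + |x|) ^ (3:ℕ) := by
            rw [show (3:ℝ) = ((3:ℕ):ℝ) by norm_num, Real.rpow_natCast]
    exact (hψ_bound x).trans (mul_le_mul_of_nonneg_left key hA.le)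
  have hb2 : ∀ x : ℝ, |deriv ψ x| ≤ A * (1 + |x|) ^ (2:ℕ) := by
    intro x
    have hx0 : (0:ℝ) ≤ |x| := abs_nonneg x
    have key : |x| ^ (2 - δ) ≤ (1 + |x|) ^ (2:ℕ) := by
      calc |x| ^ (2 - δ) ≤ (1 + |x|) ^ (2 - δ) :=
            Real.rpow_le_rpow hx0 (by linarith) (by linarith)
        _ ≤ (1 + |x|) ^ (2:ℝ) :=
            Real.rpow_le_rpow_of_exponent_le (by linarith) (by linarith)
        _ = (1 + |x|) ^ (2:ℕ) := by
            rw [show (2:ℝ) = ((2:ℕ):ℝ) by norm_num, Real.rpow_natCast]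
    exact (hψ'_bound x).trans (mul_le_mul_of_nonneg_left key hA.le)
  -- the constant
  refine ⟨27 * (4 * A + 4 * A ^ 2) * (1 + B), ?_, ?_⟩
  · have h2c : 0 < B := by rw [hBdef]; exact div_pos two_pos hcpos
    have : 0 < 4 * A + 4 * A ^ 2 := by positivity
    nlinarith
  intro ρ hρ u
  have hapos : 0 < ρ ^ thetaExp γ := Real.rpow_pos_of_pos hρ _
  set a := ρ ^ thetaExp γ with ha
  set M := 1 + |u| + a with hM
  have hu0 : (0:ℝ) ≤ |u| := abs_nonneg u
  have hM1 : 1 ≤ M := by rw [hM]; linarith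
  have hM0 : 0 < M := by linarith
  clear_value a M
  -- generic bound for interval integrals
  have habs_int : ∀ f : ℝ → ℝ, ∀ C : ℝ, (∀ s ∈ Set.uIoc (-1:ℝ) 1, |f s| ≤ C) →
      |∫ s in (-1:ℝ)..1, f s| ≤ 2 * C := by
    intro f C h
    have := intervalIntegral.norm_integral_le_of_norm_le_const (a := (-1:ℝ)) (b := 1)
      (C := C) (f := f) (by intro x hx; rw [Real.norm_eq_abs]; exact h x hx)
    rw [Real.norm_eq_abs] at this
    norm_num at this
    linarith
  -- argument bound
  have harg : ∀ s ∈ Set.uIoc (-1:ℝ) 1, 1 + |u + a * s| ≤ M := by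
    intro s hs
    have hs1 := (hsw s hs).2
    have h2 : |a * s| ≤ a := by
      rw [abs_mul, abs_of_pos hapos]
      nlinarith
    have := abs_add_le u (a * s)
    rw [hM]; linarith
  -- entropy bound
  have hη : |entropy γ ψ ρ u| ≤ ρ * (2 * (A * M ^ 3)) := by
    rw [entropy, abs_mul, abs_of_pos hρ, ← ha]
    refine mul_le_mul_of_nonneg_left ?_ hρ.le
    refine habs_int _ _ ?_
    intro s hs
    rw [abs_mul]
    have h1' := (hsw s hs).1
    have h2' := harg s hs
    have h3' := hb3 (u + a * s)
    have h4' : A * (1 + |u + a * s|) ^ 3 ≤ A * M ^ 3 :=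
      mul_le_mul_of_nonneg_left (pow_le_pow_left₀ (by positivity) h2' 3) hA.le
    calc |ψ (u + a * s)| * |(1 - s ^ 2) ^ lamExp γ|
        ≤ (A * M ^ 3) * 1 := by
          apply mul_le_mul (h3'.trans h4') h1' (abs_nonneg _) (by positivity)
      _ = A * M ^ 3 := mul_one _
  -- flux bound
  have hq : |entropyFlux γ ψ ρ u| ≤ ρ * (2 * (A * M ^ 4)) := by
    rw [entropyFlux, abs_mul, abs_of_pos hρ, ← ha]
    refine mul_le_mul_of_nonneg_left ?_ hρ.le
    refine habs_int _ _ ?_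
    intro s hs
    have h1' := (hsw s hs).1
    have hs1 := (hsw s hs).2
    have h2' := harg s hs
    have h3' := hb3 (u + a * s)
    have h4' : A * (1 + |u + a * s|) ^ 3 ≤ A * M ^ 3 :=
      mul_le_mul_of_nonneg_left (pow_le_pow_left₀ (by positivity) h2' 3) hA.le
    have hcoef : |u + thetaExp γ * a * s| ≤ M := by
      have h5 : |thetaExp γ * a * s| ≤ a := by
        rw [abs_mul, abs_mul, abs_of_pos hθ0, abs_of_pos hapos]
        calc thetaExp γ * a * |s| ≤ thetaExp γ * a * 1 := by
              apply mul_le_mul_of_nonneg_left hs1 (by positivity)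
          _ = thetaExp γ * a := mul_one _
          _ ≤ 1 * a := mul_le_mul_of_nonneg_right hθle hapos.le
          _ = a := one_mul a
      have := abs_add_le u (thetaExp γ * a * s)
      rw [hM]; linarith
    rw [abs_mul, abs_mul]
    calc |u + thetaExp γ * a * s| * |ψ (u + a * s)| * |(1 - s ^ 2) ^ lamExp γ|
        ≤ M * (A * M ^ 3) * 1 := by
          apply mul_le_mul _ h1' (abs_nonneg _) (by positivity)
          exact mul_le_mul hcoef (h3'.trans h4') (abs_nonneg _) hM0.le
      _ = A * M ^ 4 := by ring
  -- derivative of the entropy in u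
  have hFc : ∀ x : ℝ, Continuous (fun s : ℝ => ψ (x + a * s) * (1 - s ^ 2) ^ lamExp γ) :=
    fun x => (hψc.comp (continuous_const.add (continuous_const.mul continuous_id))).mul hw
  have hF'c : ∀ x : ℝ, Continuous (fun s : ℝ => deriv ψ (x + a * s) * (1 - s ^ 2) ^ lamExp γ) :=
    fun x => (hψ'c.comp (continuous_const.add (continuous_const.mul continuous_id))).mul hw
  have hbound : ∀ t : ℝ, t ∈ Set.uIoc (-1:ℝ) 1 → ∀ x ∈ Metric.ball u 1,
      ‖deriv ψ (x + a * t) * (1 - t ^ 2) ^ lamExp γ‖ ≤ A * (2 * M) ^ 2 := by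
    intro t ht x hx
    have hxu : |x| ≤ |u| + 1 := by
      have hxd : |x - u| < 1 := by simpa [Real.dist_eq] using hx
      have := abs_sub_abs_le_abs_sub x u
      linarith
    have ht1 := (hsw t ht).2
    have h2 : |a * t| ≤ a := by
      rw [abs_mul, abs_of_pos hapos]; nlinarith
    have harg' : 1 + |x + a * t| ≤ 2 * M := by
      have := abs_add_le x (a * t)
      rw [hM]; linarith
    have h3 := hb2 (x + a * t)
    have h4 : A * (1 + |x + a * t|) ^ 2 ≤ A * (2 * M) ^ 2 :=
      mul_le_mul_of_nonneg_left (pow_le_pow_left₀ (by positivity) harg' 2) hA.le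
    rw [Real.norm_eq_abs, abs_mul]
    calc |deriv ψ (x + a * t)| * |(1 - t ^ 2) ^ lamExp γ|
        ≤ (A * (2 * M) ^ 2) * 1 :=
          mul_le_mul (h3.trans h4) (hsw t ht).1 (abs_nonneg _) (by positivity)
      _ = A * (2 * M) ^ 2 := mul_one _
  have hdiff : ∀ t : ℝ, t ∈ Set.uIoc (-1:ℝ) 1 → ∀ x ∈ Metric.ball u 1,
      HasDerivAt (fun x => ψ (x + a * t) * (1 - t ^ 2) ^ lamExp γ)
        (deriv ψ (x + a * t) * (1 - t ^ 2) ^ lamExp γ) x := by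
    intro t _ x _
    have h1' : HasDerivAt (fun x : ℝ => x + a * t) 1 x := (hasDerivAt_id x).add_const _
    have h2' : HasDerivAt ψ (deriv ψ (x + a * t)) (x + a * t) := (hψd _).hasDerivAt
    have := (h2'.comp x h1').mul_const ((1 - t ^ 2) ^ lamExp γ)
    simpa using this
  obtain ⟨-, key⟩ := intervalIntegral.hasDerivAt_integral_of_dominated_loc_of_deriv_le
      (F := fun x s => ψ (x + a * s) * (1 - s ^ 2) ^ lamExp γ)
      (F' := fun x s => deriv ψ (x + a * s) * (1 - s ^ 2) ^ lamExp γ)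
      (x₀ := u) (s := Metric.ball u 1) (a := (-1:ℝ)) (b := 1) (μ := volume)
      (bound := fun _ => A * (2 * M) ^ 2)
      (Metric.ball_mem_nhds u one_pos)
      (Filter.Eventually.of_forall fun x => (hFc x).aestronglyMeasurable)
      ((hFc u).intervalIntegrable _ _)
      ((hF'c u).aestronglyMeasurable)
      (Filter.Eventually.of_forall hbound)
      intervalIntegrable_const
      (Filter.Eventually.of_forall hdiff)
  have hder : HasDerivAt (fun v => entropy γ ψ ρ v)
      (ρ * ∫ s in (-1:ℝ)..1, deriv ψ (u + a * s) * (1 - s ^ 2) ^ lamExp γ) u := by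
    have := HasDerivAt.const_mul ρ key
    simpa only [entropy, ← ha] using this
  have hD : |deriv (fun v => entropy γ ψ ρ v) u| ≤ ρ * (2 * (A * M ^ 2)) := by
    rw [hder.deriv, abs_mul, abs_of_pos hρ]
    refine mul_le_mul_of_nonneg_left ?_ hρ.le
    refine habs_int _ _ ?_
    intro s hs
    rw [abs_mul]
    have h3' := hb2 (u + a * s)
    have h4' : A * (1 + |u + a * s|) ^ 2 ≤ A * M ^ 2 :=
      mul_le_mul_of_nonneg_left (pow_le_pow_left₀ (by positivity) (harg s hs) 2) hA.le
    calc |deriv ψ (u + a * s)| * |(1 - s ^ 2) ^ lamExp γ|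
        ≤ (A * M ^ 2) * 1 :=
          mul_le_mul (h3'.trans h4') (hsw s hs).1 (abs_nonneg _) (by positivity)
      _ = A * M ^ 2 := mul_one _
  -- combine the three bounds
  have hDsq : (1 / ρ) * |deriv (fun v => entropy γ ψ ρ v) u| ^ 2 ≤ 4 * A ^ 2 * (ρ * M ^ 4) := by
    have h1' : |deriv (fun v => entropy γ ψ ρ v) u| ^ 2 ≤ (ρ * (2 * (A * M ^ 2))) ^ 2 :=
      pow_le_pow_left₀ (abs_nonneg _) hD 2
    have h2' : (1 / ρ) * (ρ * (2 * (A * M ^ 2))) ^ 2 = 4 * A ^ 2 * (ρ * M ^ 4) := by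
      field_simp; ring
    have h3' : (1 / ρ) * |deriv (fun v => entropy γ ψ ρ v) u| ^ 2
        ≤ (1 / ρ) * (ρ * (2 * (A * M ^ 2))) ^ 2 :=
      mul_le_mul_of_nonneg_left h1' (by positivity)
    linarith
  have step1 : |entropy γ ψ ρ u| + |entropyFlux γ ψ ρ u| +
      (1 / ρ) * |deriv (fun v => entropy γ ψ ρ v) u| ^ 2 ≤
      (4 * A + 4 * A ^ 2) * (ρ * M ^ 4) := by
    have h34 : M ^ 3 ≤ M ^ 4 := pow_le_pow_right₀ hM1 (by norm_num)
    have h34' : ρ * M ^ 3 ≤ ρ * M ^ 4 := mul_le_mul_of_nonneg_left h34 hρ.le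
    have h34'' : A * (ρ * M ^ 3) ≤ A * (ρ * M ^ 4) := mul_le_mul_of_nonneg_left h34' hA.le
    linarith
  -- algebraic estimates on M
  have hM4 : M ^ 4 ≤ 27 * (1 + |u| ^ 4 + a ^ 4) := by
    have e1 : M ^ 2 ≤ 3 * (1 + |u| ^ 2 + a ^ 2) := by
      rw [hM]
      nlinarith [sq_nonneg (1 - |u|), sq_nonneg (|u| - a), sq_nonneg (1 - a)]
    have e2 : M ^ 4 = (M ^ 2) ^ 2 := by ring
    have e3 : (M ^ 2) ^ 2 ≤ (3 * (1 + |u| ^ 2 + a ^ 2)) ^ 2 :=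
      pow_le_pow_left₀ (by positivity) e1 2
    have e4 : (3 * (1 + |u| ^ 2 + a ^ 2)) ^ 2 ≤ 27 * (1 + |u| ^ 4 + a ^ 4) := by
      nlinarith [sq_nonneg (1 - |u| ^ 2), sq_nonneg (|u| ^ 2 - a ^ 2), sq_nonneg (1 - a ^ 2)]
    linarith [e2 ▸ e3]
  have hra : ρ * a ^ 4 = ρ ^ (2 * γ - 1) := by
    rw [ha, ← Real.rpow_natCast (ρ ^ thetaExp γ) 4, ← Real.rpow_mul hρ.le]
    nth_rewrite 1 [← Real.rpow_one ρ]
    rw [← Real.rpow_add hρ]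
    congr 1
    unfold thetaExp
    push_cast
    ring
  have hRnn : 0 ≤ ρ ^ (2 * γ - 1) := Real.rpow_nonneg hρ.le _
  have hρle : ρ ≤ 1 + ρ ^ (2 * γ - 1) := by
    rcases le_total ρ 1 with h | h
    · linarith
    · have : ρ ^ (1:ℝ) ≤ ρ ^ (2 * γ - 1) :=
        Real.rpow_le_rpow_of_exponent_le h (by linarith)
      rw [Real.rpow_one] at this
      linarith
  have hg : gFun γ ρ = c * ρ ^ (2 * γ - 1) := by rw [gFun, hc]
  have hgnn : 0 ≤ gFun γ ρ := by rw [hg]; exact mul_nonneg hcpos.le hRnn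
  have hPnn : 0 ≤ ρ * pressure γ ρ := by
    rw [pressure]
    exact mul_nonneg hρ.le (mul_nonneg hκ.le (Real.rpow_nonneg hρ.le γ))
  have hUnn : 0 ≤ ρ * |u| ^ 4 := by positivity
  have step2 : ρ * M ^ 4 ≤ 27 * (ρ + ρ * |u| ^ 4 + ρ ^ (2 * γ - 1)) := by
    have h6 := mul_le_mul_of_nonneg_left hM4 hρ.le
    linarith [hra, h6]
  -- finish
  have hKnn : (0:ℝ) ≤ 4 * A + 4 * A ^ 2 := by positivity
  have step3 : (4 * A + 4 * A ^ 2) * (ρ * M ^ 4) ≤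
      27 * (4 * A + 4 * A ^ 2) * (1 + ρ * |u| ^ 4 + gFun γ ρ + ρ * pressure γ ρ) * (1 + B) := by
    have h5 : ρ + ρ * |u| ^ 4 + ρ ^ (2 * γ - 1) ≤
        (1 + B) * (1 + ρ * |u| ^ 4 + gFun γ ρ + ρ * pressure γ ρ) := by
      rw [hg]
      have hBcR : B * c * ρ ^ (2 * γ - 1) = 2 * ρ ^ (2 * γ - 1) := by rw [hBc]
      have e1 : 0 ≤ B * (ρ * |u| ^ 4) := mul_nonneg hB hUnn
      have e2 : 0 ≤ B * (ρ * pressure γ ρ) := mul_nonneg hB hPnn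
      have e3 : 0 ≤ c * ρ ^ (2 * γ - 1) := mul_nonneg hcpos.le hRnn
      nlinarith [hBcR, e1, e2, e3, hρle, hB]
    have h6 := mul_le_mul_of_nonneg_left step2 hKnn
    have h7 := mul_le_mul_of_nonneg_left h5 (by positivity : (0:ℝ) ≤ 27 * (4 * A + 4 * A ^ 2))
    nlinarith [h6, h7]
  calc |entropy γ ψ ρ u| + |entropyFlux γ ψ ρ u| +
      (1 / ρ) * |deriv (fun v => entropy γ ψ ρ v) u| ^ 2
      ≤ (4 * A + 4 * A ^ 2) * (ρ * M ^ 4) := step1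
    _ ≤ 27 * (4 * A + 4 * A ^ 2) * (1 + ρ * |u| ^ 4 + gFun γ ρ + ρ * pressure γ ρ) * (1 + B) :=
        step3
    _ = 27 * (4 * A + 4 * A ^ 2) * (1 + B) *
        (1 + ρ * |u| ^ 4 + gFun γ ρ + ρ * pressure γ ρ) := by ring
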